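/- Let C = C(G₁, …, G_n) be the chain of pairwise disjoint connected graphs G₁, …, G_n with respect to vertices {x_i, y_i}, obtained by identifying y_i with x_{i+1} for i = 1, …, n−1. Then γ_st(C) ≤ (Σ_{i=1}^{n} γ_st(G_i)) + n − 1. -/

import Mathlib

open SimpleGraph

/-- The degree of a vertex `v` in the graph `G`. -/
noncomputable def deg {V : Type*} (G : SimpleGraph V) (v : V) : ℕ :=
  (G.neighborSet v).ncard

/-- `D` is a strong dominating set of `G`: every vertex outside `D` has a neighbor in `D`
of at least its own degree. -/
def IsSDS {V : Type*} (G : SimpleGraph V) (D : Set V) : Prop :=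
  ∀ x ∉ D, ∃ y ∈ D, G.Adj x y ∧ deg G x ≤ deg G y

/-- The strong domination number of `G`. -/
noncomputable def gammaSt {V : Type*} (G : SimpleGraph V) : ℕ :=
  sInf {n | ∃ D : Set V, IsSDS G D ∧ D.ncard = n}

/-- The setoid on the disjoint union `Σ i, V i` generated by identifying the vertex `y i`
of `G i` with the vertex `x (i+1)` of `G (i+1)`. -/
def chainSetoid {n : ℕ} {V : Fin n → Type*} (x y : ∀ i, V i) : Setoid (Σ i, V i) :=
  Relation.EqvGen.setoid (fun a b => ∃ (i j : Fin n), (j : ℕ) = (i : ℕ) + 1 ∧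
    a = ⟨i, y i⟩ ∧ b = ⟨j, x j⟩)

/-- The chain `C(G₁, …, Gₙ)` of the graphs `G i` with respect to the vertices `x i, y i`:
the quotient of the disjoint union identifying `y i` with `x (i+1)`, two classes being
adjacent when they have representatives adjacent in some `G i`. -/
def chainGraph {n : ℕ} {V : Fin n → Type*} (G : ∀ i, SimpleGraph (V i)) (x y : ∀ i, V i) :
    SimpleGraph (Quotient (chainSetoid x y)) :=
  SimpleGraph.fromRel (fun a b => ∃ (i : Fin n) (p q : V i),
    a = Quotient.mk (chainSetoid x y) ⟨i, p⟩ ∧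
    b = Quotient.mk (chainSetoid x y) ⟨i, q⟩ ∧ (G i).Adj p q)

/-! ### Auxiliary machinery -/

section Aux

variable {n : ℕ} {V : Fin n → Type*}

/-- The generating relation of the chain setoid. -/
def crel (x y : ∀ i, V i) (a b : Σ i, V i) : Prop :=
  ∃ (i j : Fin n), (j : ℕ) = (i : ℕ) + 1 ∧ a = ⟨i, y i⟩ ∧ b = ⟨j, x j⟩

open Classical in
/-- Canonical representative: repeatedly replace `x (i+1)` by `y i`. -/
noncomputable def down (x y : ∀ i, V i) :
    (Σ i : Fin n, V i) → Σ i : Fin n, V i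
  | ⟨i, v⟩ =>
    if h : 0 < (i : ℕ) ∧ v = x i then
      down x y ⟨⟨(i : ℕ) - 1, Nat.lt_of_le_of_lt (Nat.sub_le _ _) i.isLt⟩,
        y ⟨(i : ℕ) - 1, Nat.lt_of_le_of_lt (Nat.sub_le _ _) i.isLt⟩⟩
    else ⟨i, v⟩
  termination_by a => (a.1 : ℕ)
  decreasing_by simp; omega

lemma down_fst_le (x y : ∀ i, V i) (a : Σ i : Fin n, V i) :
    ((down x y a).1 : ℕ) ≤ (a.1 : ℕ) := by
  obtain ⟨i, v⟩ := a
  rw [down]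
  split
  · exact le_trans (down_fst_le x y _) (by simp)
  · exact le_refl _
  termination_by (a.1 : ℕ)
  decreasing_by simp; omega

lemma down_fst_lt (x y : ∀ i, V i) {i : Fin n} {v : V i}
    (h : 0 < (i : ℕ) ∧ v = x i) : ((down x y ⟨i, v⟩).1 : ℕ) < (i : ℕ) := by
  rw [down, dif_pos h]
  exact lt_of_le_of_lt (down_fst_le x y _) (by simp; omega)

lemma down_crel (x y : ∀ i, V i) {a b : Σ i, V i} (h : crel x y a b) :
    down x y a = down x y b := by
  obtain ⟨i, j, hij, rfl, rfl⟩ := h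
  have h0 : 0 < (j : ℕ) := by omega
  have key : ∀ (k : Fin n), k = i → down x y ⟨k, y k⟩ = down x y ⟨i, y i⟩ :=
    fun k hk => by rw [hk]
  rw [show down x y ⟨j, x j⟩ =
      down x y ⟨⟨(j : ℕ) - 1, Nat.lt_of_le_of_lt (Nat.sub_le _ _) j.isLt⟩,
        y ⟨(j : ℕ) - 1, Nat.lt_of_le_of_lt (Nat.sub_le _ _) j.isLt⟩⟩ by
    rw [down]; exact dif_pos ⟨h0, rfl⟩]
  exact (key _ (Fin.ext (by simp; omega))).symm

lemma down_eqvGen (x y : ∀ i, V i) {a b : Σ i, V i}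
    (h : Relation.EqvGen (crel x y) a b) : down x y a = down x y b := by
  induction h with
  | rel a b hab => exact down_crel x y hab
  | refl a => rfl
  | symm a b _ ih => exact ih.symm
  | trans a b c _ _ ih1 ih2 => exact ih1.trans ih2

lemma down_same_index (x y : ∀ i, V i) {i : Fin n} {p q : V i}
    (h : down x y ⟨i, p⟩ = down x y ⟨i, q⟩) : p = q := by
  by_cases h1 : 0 < (i : ℕ) ∧ p = x i
  · by_cases h2 : 0 < (i : ℕ) ∧ q = x i
    · rw [h1.2, h2.2]
    · rw [show down x y ⟨i, q⟩ = ⟨i, q⟩ by rw [down]; exact dif_neg h2] at h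
      have := down_fst_lt x y h1
      rw [h] at this
      simp at this
  · by_cases h2 : 0 < (i : ℕ) ∧ q = x i
    · rw [show down x y ⟨i, p⟩ = ⟨i, p⟩ by rw [down]; exact dif_neg h1] at h
      have := down_fst_lt x y h2
      rw [← h] at this
      simp at this
    · rw [show down x y ⟨i, p⟩ = ⟨i, p⟩ by rw [down]; exact dif_neg h1,
        show down x y ⟨i, q⟩ = ⟨i, q⟩ by rw [down]; exact dif_neg h2] at h
      simpa using h

lemma mk_same_index (x y : ∀ i, V i) {i : Fin n} {p q : V i}
    (h : Quotient.mk (chainSetoid x y) ⟨i, p⟩ = Quotient.mk (chainSetoid x y) ⟨i, q⟩) :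
    p = q := by
  have h' : Relation.EqvGen (crel x y) ⟨i, p⟩ ⟨i, q⟩ := Quotient.eq.mp h
  exact down_same_index x y (down_eqvGen x y h')

/-- A vertex of the disjoint union that gets identified with another one. -/
def Joint (x y : ∀ i, V i) (a : Σ i, V i) : Prop :=
  (∃ (i j : Fin n), (j : ℕ) = (i : ℕ) + 1 ∧ a = ⟨i, y i⟩) ∨
  (∃ j : Fin n, 0 < (j : ℕ) ∧ a = ⟨j, x j⟩)

lemma eqvGen_eq_or_joint (x y : ∀ i, V i) {a b : Σ i, V i}
    (h : Relation.EqvGen (crel x y) a b) : a = b ∨ (Joint x y a ∧ Joint x y b) := by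
  induction h with
  | rel a b hab =>
    obtain ⟨i, j, hij, rfl, rfl⟩ := hab
    exact Or.inr ⟨Or.inl ⟨i, j, hij, rfl⟩, Or.inr ⟨j, by omega, rfl⟩⟩
  | refl a => exact Or.inl rfl
  | symm a b _ ih =>
    rcases ih with h | h
    · exact Or.inl h.symm
    · exact Or.inr ⟨h.2, h.1⟩
  | trans a b c _ _ ih1 ih2 =>
    rcases ih1 with h1 | h1
    · rw [h1]; exact ih2
    · rcases ih2 with h2 | h2
      · rw [← h2]; exact Or.inr h1
      · exact Or.inr ⟨h1.1, h2.2⟩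

lemma class_singleton (x y : ∀ i, V i) {a : Σ i, V i} (ha : ¬ Joint x y a)
    {b : Σ i, V i} (h : Relation.EqvGen (crel x y) a b) : b = a := by
  rcases eqvGen_eq_or_joint x y h with h' | h'
  · exact h'.symm
  · exact absurd h'.1 ha

lemma joint_class (x y : ∀ i, V i) {a : Σ i, V i} (ha : Joint x y a) :
    ∃ j : Fin n, 0 < (j : ℕ) ∧
      Quotient.mk (chainSetoid x y) a = Quotient.mk (chainSetoid x y) ⟨j, x j⟩ := by
  rcases ha with ⟨i, j, hij, rfl⟩ | ⟨j, hj, rfl⟩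
  · exact ⟨j, by omega, Quotient.sound (Relation.EqvGen.rel _ _ ⟨i, j, hij, rfl, rfl⟩)⟩
  · exact ⟨j, hj, rfl⟩

variable [∀ i, Fintype (V i)]

instance : Finite (Σ i : Fin n, V i) := by infer_instance

lemma adj_chain (G : ∀ i, SimpleGraph (V i)) (x y : ∀ i, V i) {i : Fin n} {p q : V i}
    (h : (G i).Adj p q) :
    (chainGraph G x y).Adj (Quotient.mk (chainSetoid x y) ⟨i, p⟩)
      (Quotient.mk (chainSetoid x y) ⟨i, q⟩) := by
  refine ⟨fun he => h.ne (mk_same_index x y he), Or.inl ⟨i, p, q, rfl, rfl, h⟩⟩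

lemma deg_le_chain (G : ∀ i, SimpleGraph (V i)) (x y : ∀ i, V i) (i : Fin n) (v : V i) :
    deg (G i) v ≤ deg (chainGraph G x y) (Quotient.mk (chainSetoid x y) ⟨i, v⟩) := by
  have hinj : Set.InjOn (fun q : V i => Quotient.mk (chainSetoid x y) ⟨i, q⟩)
      ((G i).neighborSet v) := fun a _ b _ hab => mk_same_index x y hab
  have hsub : (fun q : V i => Quotient.mk (chainSetoid x y) ⟨i, q⟩) '' ((G i).neighborSet v)
      ⊆ (chainGraph G x y).neighborSet (Quotient.mk (chainSetoid x y) ⟨i, v⟩) := by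
    rintro c ⟨q, hq, rfl⟩
    exact adj_chain G x y hq
  calc deg (G i) v
      = ((fun q : V i => Quotient.mk (chainSetoid x y) ⟨i, q⟩) '' ((G i).neighborSet v)).ncard :=
        (Set.ncard_image_of_injOn hinj).symm
    _ ≤ _ := Set.ncard_le_ncard hsub (Set.toFinite _)

lemma chain_deg_le (G : ∀ i, SimpleGraph (V i)) (x y : ∀ i, V i) {i : Fin n} {p : V i}
    (hp : ¬ Joint x y (⟨i, p⟩ : Σ i, V i)) :
    deg (chainGraph G x y) (Quotient.mk (chainSetoid x y) ⟨i, p⟩) ≤ deg (G i) p := by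
  have hsub : (chainGraph G x y).neighborSet (Quotient.mk (chainSetoid x y) ⟨i, p⟩)
      ⊆ (fun q : V i => Quotient.mk (chainSetoid x y) ⟨i, q⟩) '' ((G i).neighborSet p) := by
    intro c hc
    obtain ⟨hne, hr⟩ := hc
    have key : ∀ (j : Fin n) (u w : V j),
        Quotient.mk (chainSetoid x y) ⟨i, p⟩ = Quotient.mk (chainSetoid x y) ⟨j, u⟩ →
        c = Quotient.mk (chainSetoid x y) ⟨j, w⟩ → (G j).Adj u w →
        c ∈ (fun q : V i => Quotient.mk (chainSetoid x y) ⟨i, q⟩) '' ((G i).neighborSet p) := by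
      intro j u w h1 h2 hadj
      have h1' : (⟨j, u⟩ : Σ i, V i) = ⟨i, p⟩ :=
        class_singleton x y hp (Quotient.eq.mp h1)
      obtain ⟨rfl, hu⟩ := Sigma.mk.inj_iff.mp h1'
      have hu' : u = p := eq_of_heq hu
      subst hu'
      exact ⟨w, hadj, h2.symm⟩
    rcases hr with ⟨j, u, w, h1, h2, hadj⟩ | ⟨j, u, w, h1, h2, hadj⟩
    · exact key j u w h1 h2 hadj
    · exact key j w u h2 h1 hadj.symm
  calc deg (chainGraph G x y) (Quotient.mk (chainSetoid x y) ⟨i, p⟩)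
      ≤ ((fun q : V i => Quotient.mk (chainSetoid x y) ⟨i, q⟩) '' ((G i).neighborSet p)).ncard :=
        Set.ncard_le_ncard hsub (Set.toFinite _)
    _ ≤ deg (G i) p := Set.ncard_image_le (Set.toFinite _)

end Aux

lemma gammaSt_exists {W : Type*} (G : SimpleGraph W) :
    ∃ D : Set W, IsSDS G D ∧ D.ncard = gammaSt G := by
  have hne : {m | ∃ D : Set W, IsSDS G D ∧ D.ncard = m}.Nonempty :=
    ⟨(Set.univ : Set W).ncard, Set.univ, fun v hv => absurd (Set.mem_univ v) hv, rfl⟩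
  exact Nat.sInf_mem hne

lemma ncard_biUnion_le {α ι : Type*} [Finite α] (t : Finset ι) (s : ι → Set α) :
    (⋃ i ∈ t, s i).ncard ≤ ∑ i ∈ t, (s i).ncard := by
  classical
  induction t using Finset.induction with
  | empty => simp
  | insert a t' h ih =>
    rw [Finset.set_biUnion_insert, Finset.sum_insert h]
    exact le_trans (Set.ncard_union_le _ _) (Nat.add_le_add_left ih _)

/-- Upper bound on the strong domination number of the chain of `n` pairwise disjoint
connected graphs. -/
theorem stmt_8 {n : ℕ} (hn : 1 ≤ n) {V : Fin n → Type*} [∀ i, Fintype (V i)]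
    (G : ∀ i, SimpleGraph (V i)) (hconn : ∀ i, (G i).Connected) (x y : ∀ i, V i) :
    gammaSt (chainGraph G x y) ≤ (∑ i, gammaSt (G i)) + (n - 1) := by
  classical
  haveI : NeZero n := ⟨by omega⟩
  choose D hD hcard using fun i => gammaSt_exists (G i)
  set Q := Quotient (chainSetoid x y)
  let f : ∀ i : Fin n, V i → Q := fun i v => Quotient.mk (chainSetoid x y) ⟨i, v⟩
  let J : Set Q := (fun j : Fin n => f j (x j)) '' {j : Fin n | 0 < (j : ℕ)}
  let Dc : Set Q := (⋃ i, f i '' D i) ∪ J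
  have hSDS : IsSDS (chainGraph G x y) Dc := by
    intro c hc
    obtain ⟨⟨i, p⟩, rfl⟩ := Quotient.exists_rep c
    have hpj : ¬ Joint x y (⟨i, p⟩ : Σ i, V i) := by
      intro hj
      obtain ⟨j, hj0, hje⟩ := joint_class x y hj
      exact hc (Or.inr ⟨j, hj0, hje.symm⟩)
    have hpD : p ∉ D i := fun h =>
      hc (Or.inl (Set.mem_iUnion.2 ⟨i, ⟨p, h, rfl⟩⟩))
    obtain ⟨d, hdD, hadj, hdeg⟩ := hD i p hpD
    refine ⟨f i d, Or.inl (Set.mem_iUnion.2 ⟨i, ⟨d, hdD, rfl⟩⟩), adj_chain G x y hadj, ?_⟩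
    calc deg (chainGraph G x y) (Quotient.mk (chainSetoid x y) ⟨i, p⟩)
        ≤ deg (G i) p := chain_deg_le G x y hpj
      _ ≤ deg (G i) d := hdeg
      _ ≤ deg (chainGraph G x y) (f i d) := deg_le_chain G x y i d
  have hle : gammaSt (chainGraph G x y) ≤ Dc.ncard := Nat.sInf_le ⟨Dc, hSDS, rfl⟩
  refine le_trans hle ?_
  have hJ : J.ncard ≤ n - 1 := by
    have h1 : J.ncard ≤ ({j : Fin n | 0 < (j : ℕ)} : Set (Fin n)).ncard :=
      Set.ncard_image_le (Set.toFinite _)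
    have h2 : ({j : Fin n | 0 < (j : ℕ)} : Set (Fin n)) = ({(0 : Fin n)} : Set (Fin n))ᶜ := by
      ext j
      simp only [Set.mem_setOf_eq, Set.mem_compl_iff, Set.mem_singleton_iff, Fin.ext_iff,
        Fin.val_zero]
      omega
    have h3 := Set.ncard_add_ncard_compl ({(0 : Fin n)} : Set (Fin n))
    rw [Set.ncard_singleton, Nat.card_eq_fintype_card, Fintype.card_fin] at h3
    rw [h2] at h1
    omega
  have hU : (⋃ i, f i '' D i).ncard ≤ ∑ i, gammaSt (G i) := by
    have h1 : (⋃ i, f i '' D i) = ⋃ i ∈ Finset.univ, f i '' D i := by simp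
    rw [h1]
    refine le_trans (ncard_biUnion_le _ _) (Finset.sum_le_sum fun i _ => ?_)
    rw [← hcard i]
    exact Set.ncard_image_le (Set.toFinite _)
  calc Dc.ncard ≤ (⋃ i, f i '' D i).ncard + J.ncard := Set.ncard_union_le _ _
    _ ≤ (∑ i, gammaSt (G i)) + (n - 1) := Nat.add_le_add hU hJ
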